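/- If T : (ℕ → Ordinal) → Ordinal is strictly monotone on z-special elements, then v a ≤ T a for every sequence a : ℕ → Ordinal. -/
import Mathlib

/-- `ζ_a`: the least ordinal `ζ` such that `{i | ζ < a i}` is finite. -/
noncomputable def zetaSeq (a : ℕ → Ordinal.{0}) : Ordinal.{0} :=
  sInf {ζ : Ordinal | {i : ℕ | ζ < a i}.Finite}

/-- `S` is strictly monotone on z-special elements. -/
def StrictMonoOnZSpecial (S : (ℕ → Ordinal.{0}) → Ordinal.{0}) : Prop :=
  ∀ a b : ℕ → Ordinal, (∀ i, a i ≤ b i) →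
    (∃ j : ℕ, zetaSeq a < b j ∧ a j < b j) → S a < S b

/-- `b ≺ a` iff there are an index `i₀`, a finite set `F ⊆ ℕ` and an ordinal `β` with
`b i₀ ≤ β < a i₀`, `b i ≤ a i` for all `i`, and `b i ≤ β` for all `i ∉ F`. -/
def seqPrec (b a : ℕ → Ordinal.{0}) : Prop :=
  ∃ (i₀ : ℕ) (F : Finset ℕ) (β : Ordinal),
    b i₀ ≤ β ∧ β < a i₀ ∧ (∀ i, b i ≤ a i) ∧ ∀ i ∉ F, b i ≤ β

/-- `v a`: the rank of the sequence `a` in the well-founded relation `≺`. -/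
noncomputable def vRank (hwf : WellFounded seqPrec) (a : ℕ → Ordinal.{0}) : Ordinal.{1} :=
  @IsWellFounded.rank _ seqPrec ⟨hwf⟩ a

theorem vRank_le_of_strictMonoOnZSpecial
    (hwf : WellFounded seqPrec)
    (T : (ℕ → Ordinal.{0}) → Ordinal.{0}) (hT : StrictMonoOnZSpecial T) :
    ∀ a : ℕ → Ordinal.{0}, vRank hwf a ≤ Ordinal.lift.{1} (T a) := by
  haveI : IsWellFounded _ seqPrec := ⟨hwf⟩
  intro a
  induction a using hwf.induction with
  | _ a IH =>
    rw [vRank, @IsWellFounded.rank_eq _ seqPrec ⟨hwf⟩ a]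
    apply Ordinal.iSup_le
    rintro ⟨b, hb⟩
    rw [Order.succ_le_iff]
    calc IsWellFounded.rank seqPrec b ≤ Ordinal.lift.{1} (T b) := IH b hb
      _ < Ordinal.lift.{1} (T a) := by
        rw [Ordinal.lift_lt]
        obtain ⟨i₀, F, β, hbβ, hβa, hba, hF⟩ := hb
        refine hT b a hba ⟨i₀, ?_, lt_of_le_of_lt hbβ hβa⟩
        calc zetaSeq b ≤ β := csInf_le (OrderBot.bddBelow _)
              ((F : Set ℕ).toFinite.subset fun i hi => by
                by_contra h
                exact absurd (hF i h) (not_le.mpr hi))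
          _ < a i₀ := hβa
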